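/- arXiv:1308.6394 — 2 statements merged into one kernel-verified Lean document; each statement's English description precedes it below -/
import Mathlib

section
/- Let g: ℝ → ℂ satisfy sup_{u∈ℝ} |1 − g(u)|²(1+|u|²)^{−r} < ∞ where g is 𝓕K for a kernel K of order r whose Fourier transform 𝓕K is ⌊r⌋-times continuously differentiable with (𝓕K)^{(m)}(0) = 0 for 1 ≤ m ≤ ⌊r⌋, 𝓕K(0) = 1, and (𝓕K)^{(⌊r⌋)} is (r − ⌊r⌋)-Hölder continuous with constant L_K. Then for all h > 0 and u ∈ ℝ with |hu| ≤ π: |1 − 𝓕K(hu)| ≤ (L_K / ⌊r⌋!) |hu|^r, and hence sup_{u∈ℝ} |1 − 𝓕K(hu)|²(1+|u|²)^{−r} ≤ (L_K/⌊r⌋! + 2π^{−r})² h^{2r} when 𝓕K is supported on [−π,π]. -/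
open Real intervalIntegral

lemma taylor_step {f g : ℝ → ℂ} (hg : Continuous g)
    (hf : ∀ t, HasDerivAt f (g t) t) (hf0 : f 0 = 0)
    {C β : ℝ} (hC : 0 ≤ C) (hβ : 0 < β)
    (hbound : ∀ t, ‖g t‖ ≤ C * |t| ^ β) (x : ℝ) :
    ‖f x‖ ≤ (C / (β + 1)) * |x| ^ (β + 1) := by
  have hderiv : ∀ s ∈ Set.uIcc (0:ℝ) 1,
      HasDerivAt (fun s => f (s * x)) (x • g (s * x)) s := by
    intro s _
    have h1 : HasDerivAt (fun s : ℝ => s * x) x s := by simpa using (hasDerivAt_id s).mul_const x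
    exact (hf (s * x)).scomp s h1
  have hint : IntervalIntegrable (fun s : ℝ => x • g (s * x)) MeasureTheory.volume 0 1 :=
    (Continuous.intervalIntegrable (by continuity) 0 1)
  have heq : ∫ s in (0:ℝ)..1, x • g (s * x) = f (1 * x) - f (0 * x) :=
    integral_eq_sub_of_hasDerivAt hderiv hint
  have hfx : f x = ∫ s in (0:ℝ)..1, x • g (s * x) := by
    rw [heq]; simp [hf0]
  have hboundint : ‖∫ s in (0:ℝ)..1, x • g (s * x)‖
      ≤ |∫ s in (0:ℝ)..1, C * |x| ^ (β + 1) * s ^ β| := by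
    apply norm_integral_le_abs_of_norm_le
    · filter_upwards [MeasureTheory.ae_restrict_mem measurableSet_Ioc] with t ht
      have ht0 : 0 < t := by
        rcases Set.mem_uIoc.1 ht with h | h
        · exact h.1
        · linarith [h.1, h.2]
      have : ‖x • g (t * x)‖ = |x| * ‖g (t * x)‖ := by
        simp [norm_smul]
      rw [this]
      calc |x| * ‖g (t * x)‖ ≤ |x| * (C * |t * x| ^ β) := by
            exact mul_le_mul_of_nonneg_left (hbound _) (abs_nonneg x)
        _ = C * |x| ^ (β + 1) * t ^ β := by
            rw [abs_mul, mul_rpow (abs_nonneg t) (abs_nonneg x),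
              abs_of_pos ht0, rpow_add_one' (abs_nonneg x) (by positivity)]
            ring
    · exact ((intervalIntegrable_rpow' (by linarith)).const_mul _)
  have hval : ∫ s in (0:ℝ)..1, C * |x| ^ (β + 1) * s ^ β
      = C / (β + 1) * |x| ^ (β + 1) := by
    rw [intervalIntegral.integral_const_mul, integral_rpow (Or.inl (by linarith))]
    rw [Real.one_rpow, Real.zero_rpow (by linarith)]
    ring
  rw [hfx]
  calc ‖∫ s in (0:ℝ)..1, x • g (s * x)‖ ≤ |∫ s in (0:ℝ)..1, C * |x| ^ (β + 1) * s ^ β| :=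
        hboundint
    _ = C / (β + 1) * |x| ^ (β + 1) := by
        rw [hval, abs_of_nonneg (by positivity)]

/-- Kernel of order `r`: Taylor expansion plus Hölder continuity of the top
derivative of `𝓕K` give `|1 − 𝓕K(hu)| ≤ (L/⌊r⌋!)|hu|^r` for `|hu| ≤ π`, and hence,
when `𝓕K` is supported on `[−π,π]`,
`|1 − 𝓕K(hu)|²(1+|u|²)^{−r} ≤ (L/⌊r⌋! + 2π^{−r})² h^{2r}` for all `u`. -/
theorem kernel_order_bias_bound
    (r : ℝ) (hr : 0 < r) (m : ℕ) (hm1 : (m : ℝ) < r) (hm2 : r ≤ (m : ℝ) + 1)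
    (L : ℝ) (hL : 0 < L) (FK : ℝ → ℂ)
    (hsmooth : ContDiff ℝ m FK) (h0 : FK 0 = 1)
    (hvanish : ∀ j : ℕ, 1 ≤ j → j ≤ m → iteratedDeriv j FK 0 = 0)
    (hHolder : ∀ x y : ℝ,
      ‖iteratedDeriv m FK x - iteratedDeriv m FK y‖ ≤ L * |x - y| ^ (r - (m : ℝ)))
    (hsupp : ∀ t : ℝ, π < |t| → FK t = 0) :
    (∀ h : ℝ, 0 < h → ∀ u : ℝ, |h * u| ≤ π →
      ‖1 - FK (h * u)‖ ≤ (L / (Nat.factorial m : ℝ)) * |h * u| ^ r) ∧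
    (∀ h : ℝ, 0 < h → ∀ u : ℝ,
      ‖1 - FK (h * u)‖ ^ 2 * (1 + |u| ^ 2) ^ (-r)
        ≤ (L / (Nat.factorial m : ℝ) + 2 * π ^ (-r)) ^ 2 * h ^ (2 * r)) := by
  set D : ℕ → ℝ := fun k => ∏ i ∈ Finset.range k, (r - m + i + 1) with hD
  have hDpos : ∀ k, 0 < D k := by
    intro k
    apply Finset.prod_pos
    intro i _
    have : (0:ℝ) ≤ i := Nat.cast_nonneg i
    linarith
  -- main induction
  have key : ∀ k, k ≤ m → ∀ x : ℝ,
      ‖iteratedDeriv (m - k) FK x - iteratedDeriv (m - k) FK 0‖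
        ≤ (L / D k) * |x| ^ (r - m + k) := by
    intro k
    induction k with
    | zero =>
      intro _ x
      simpa [hD] using hHolder x 0
    | succ k ih =>
      intro hk x
      have hk' : k ≤ m := Nat.le_of_succ_le hk
      have hmk : 1 ≤ m - k := by omega
      have hsucc : m - (k + 1) + 1 = m - k := by omega
      have hβ : 0 < r - m + k := by
        have : (0:ℝ) ≤ k := Nat.cast_nonneg k
        linarith
      have hg0 : iteratedDeriv (m - k) FK 0 = 0 := hvanish _ hmk (Nat.sub_le m k)
      have hgbound : ∀ t, ‖iteratedDeriv (m - k) FK t‖ ≤ (L / D k) * |t| ^ (r - m + k) := by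
        intro t
        have := ih hk' t
        rwa [hg0, sub_zero] at this
      have hgcont : Continuous (iteratedDeriv (m - k) FK) :=
        hsmooth.continuous_iteratedDeriv _ (by exact_mod_cast Nat.sub_le m k)
      have hdiff : Differentiable ℝ (iteratedDeriv (m - (k + 1)) FK) :=
        hsmooth.differentiable_iteratedDeriv _ (by exact_mod_cast Nat.sub_lt_of_pos_le (by omega) hk)
      have hder : ∀ t, HasDerivAt
          (fun x => iteratedDeriv (m - (k + 1)) FK x - iteratedDeriv (m - (k + 1)) FK 0)
          (iteratedDeriv (m - k) FK t) t := by
        intro t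
        have h1 : HasDerivAt (iteratedDeriv (m - (k + 1)) FK)
            (deriv (iteratedDeriv (m - (k + 1)) FK) t) t := (hdiff t).hasDerivAt
        have h2 : deriv (iteratedDeriv (m - (k + 1)) FK) t = iteratedDeriv (m - k) FK t := by
          rw [← hsucc, iteratedDeriv_succ]
        rw [h2] at h1
        simpa using h1.sub_const (iteratedDeriv (m - (k + 1)) FK 0)
      have := taylor_step hgcont hder (by simp) (le_of_lt (div_pos hL (hDpos k))) hβ hgbound x
      have heq1 : r - m + k + 1 = r - m + (k + 1 : ℕ) := by push_cast; ring
      rw [heq1] at this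
      have heq2 : L / D k / (r - m + ((k : ℕ) + 1 : ℕ)) = L / D (k + 1) := by
        rw [hD]
        simp only [Finset.prod_range_succ, div_div]
        push_cast
        try ring
      rw [heq2] at this
      exact this
  -- the pointwise bound
  have hDm : (Nat.factorial m : ℝ) ≤ D m := by
    rw [hD, ← Finset.prod_range_add_one_eq_factorial]
    push_cast
    apply Finset.prod_le_prod
    · intro i _; positivity
    · intro i _
      have : (m:ℝ) < r := hm1
      linarith
  have hfactpos : (0:ℝ) < Nat.factorial m := by positivity
  have main : ∀ x : ℝ, ‖1 - FK x‖ ≤ (L / (Nat.factorial m : ℝ)) * |x| ^ r := by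
    intro x
    have := key m le_rfl x
    simp only [Nat.sub_self, iteratedDeriv_zero, h0] at this
    have heq : r - m + m = r := by ring
    rw [heq] at this
    have h1 : ‖1 - FK x‖ = ‖FK x - 1‖ := norm_sub_rev _ _
    rw [h1]
    refine this.trans ?_
    apply mul_le_mul_of_nonneg_right _ (by positivity)
    exact div_le_div_of_nonneg_left (le_of_lt hL) hfactpos hDm
  constructor
  · intro h _ u _
    exact main (h * u)
  · intro h hh u
    set A : ℝ := L / (Nat.factorial m : ℝ) with hA
    have hApos : 0 < A := div_pos hL hfactpos
    have hpipos : (0:ℝ) < π := pi_pos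
    have hw : (0:ℝ) < 1 + |u| ^ 2 := by positivity
    by_cases hcase : |h * u| ≤ π
    · -- small-frequency case
      have hb := main (h * u)
      have hb2 : ‖1 - FK (h * u)‖ ^ 2 ≤ (A * |h * u| ^ r) ^ 2 := by
        apply pow_le_pow_left₀ (norm_nonneg _) hb
      have habs : |h * u| = h * |u| := by rw [abs_mul, abs_of_pos hh]
      have hterm : (|h * u| ^ r) ^ 2 * (1 + |u| ^ 2) ^ (-r) ≤ h ^ (2 * r) := by
        have e1 : (|h * u| ^ r) ^ 2 = h ^ (2 * r) * (|u| ^ 2) ^ r := by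
          rw [habs, mul_rpow hh.le (abs_nonneg u), mul_pow,
            ← rpow_natCast (h ^ r) 2, ← rpow_mul hh.le,
            ← rpow_natCast (|u| ^ r) 2, ← rpow_mul (abs_nonneg u),
            ← rpow_natCast |u| 2, ← rpow_mul (abs_nonneg u)]
          push_cast
          rw [mul_comm r 2]
        rw [e1, mul_assoc]
        have h2 : (|u| ^ 2) ^ r * (1 + |u| ^ 2) ^ (-r) ≤ 1 := by
          rw [rpow_neg (le_of_lt hw)]
          rw [← div_eq_mul_inv]
          apply div_le_one_of_le₀
          · apply rpow_le_rpow (by positivity) (by linarith) (le_of_lt hr)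
          · positivity
        calc h ^ (2 * r) * ((|u| ^ 2) ^ r * (1 + |u| ^ 2) ^ (-r))
            ≤ h ^ (2 * r) * 1 := by
              apply mul_le_mul_of_nonneg_left h2 (by positivity)
          _ = h ^ (2 * r) := mul_one _
      calc ‖1 - FK (h * u)‖ ^ 2 * (1 + |u| ^ 2) ^ (-r)
          ≤ (A * |h * u| ^ r) ^ 2 * (1 + |u| ^ 2) ^ (-r) := by
            apply mul_le_mul_of_nonneg_right hb2 (by positivity)
        _ = A ^ 2 * ((|h * u| ^ r) ^ 2 * (1 + |u| ^ 2) ^ (-r)) := by ring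
        _ ≤ A ^ 2 * h ^ (2 * r) := mul_le_mul_of_nonneg_left hterm (by positivity)
        _ ≤ (A + 2 * π ^ (-r)) ^ 2 * h ^ (2 * r) := by
            apply mul_le_mul_of_nonneg_right _ (by positivity)
            apply pow_le_pow_left₀ (le_of_lt hApos)
            have : (0:ℝ) < 2 * π ^ (-r) := by positivity
            linarith
    · -- large-frequency case
      push_neg at hcase
      rw [hsupp _ hcase]
      have hunorm : π / h < |u| := by
        rw [div_lt_iff₀ hh]
        calc π < |h * u| := hcase
          _ = |u| * h := by rw [abs_mul, abs_of_pos hh]; ring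
      have hu0 : 0 < |u| := lt_trans (by positivity) hunorm
      have h1 : ‖(1:ℂ) - 0‖ ^ 2 = 1 := by norm_num
      rw [h1, one_mul]
      have step1 : (1 + |u| ^ 2) ^ (-r) ≤ (|u| ^ 2) ^ (-r) := by
        apply rpow_le_rpow_of_nonpos (by positivity) (by linarith) (by linarith)
      have step2 : (|u| ^ 2 : ℝ) ^ (-r) ≤ ((π / h) ^ 2) ^ (-r) := by
        apply rpow_le_rpow_of_nonpos (by positivity) _ (by linarith)
        apply pow_le_pow_left₀ (by positivity) (le_of_lt hunorm)
      have step3 : ((π / h) ^ 2 : ℝ) ^ (-r) = π ^ (-(2*r)) * h ^ (2 * r) := by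
        rw [← rpow_natCast (π / h) 2, ← rpow_mul (by positivity : (0:ℝ) ≤ π / h),
          div_rpow pi_pos.le hh.le]
        push_cast
        have e3 : h ^ ((2:ℝ) * -r) = (h ^ (2 * r))⁻¹ := by
          rw [show (2:ℝ) * -r = -(2*r) by ring, rpow_neg hh.le]
        rw [e3]
        field_simp
      calc (1 + |u| ^ 2) ^ (-r) ≤ ((|u| ^ 2 : ℝ)) ^ (-r) := step1
        _ ≤ ((π / h) ^ 2 : ℝ) ^ (-r) := step2
        _ = π ^ (-(2*r)) * h ^ (2 * r) := step3
        _ ≤ (A + 2 * π ^ (-r)) ^ 2 * h ^ (2 * r) := by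
            apply mul_le_mul_of_nonneg_right _ (by positivity)
            have e4 : π ^ (-(2*r)) = (π ^ (-r)) ^ 2 := by
              rw [← rpow_natCast (π ^ (-r)) 2, ← rpow_mul pi_pos.le]
              push_cast
              congr 1
              ring
            rw [e4]
            have h5 : (0:ℝ) < π ^ (-r) := by positivity
            nlinarith [sq_nonneg A, mul_pos hApos h5]
end

section
/- Let Z₁, …, Z_n be i.i.d. complex-valued random variables of modulus ≤ 1 (namely e^{iuX_j} for fixed u), with characteristic function φ(u) = E[e^{iuX₁}], and let φ̂_n(u) = (1/n)Σ e^{iuX_j}. Define the truncated reciprocal 1/φ̃_n(u) := 1(|φ̂_n(u)| ≥ n^{−1/2})/φ̂_n(u). Then for every k ≥ 1 there is a constant C_k depending only on k such that E[ |1/φ̃_n(u) − 1/φ(u)|^k ] ≤ C_k ( n^{−k/2}/|φ(u)|^{2k} ∧ 1/|φ(u)|^k ) for all u with φ(u) ≠ 0. -/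
open MeasureTheory ProbabilityTheory

namespace NeumannProofAux

open Finset

variable {Ω : Type} [MeasurableSpace Ω] {P : Measure Ω}

lemma integrable_of_bound [IsProbabilityMeasure P] {E : Type*} [NormedAddCommGroup E]
    {f : Ω → E} (hf : AEStronglyMeasurable f P) (c : ℝ) (hb : ∀ ω, ‖f ω‖ ≤ c) :
    Integrable f P :=
  ⟨hf, HasFiniteIntegral.of_bounded (ae_of_all _ hb)⟩

lemma indep_integral_mul [IsProbabilityMeasure P] {A B : Ω → ℂ}
    (h : IndepFun A B P) (hA : Measurable A) (hB : Measurable B)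
    {a b : ℝ} (ha0 : 0 ≤ a) (hb0 : 0 ≤ b) (ha : ∀ ω, ‖A ω‖ ≤ a) (hb : ∀ ω, ‖B ω‖ ≤ b) :
    ∫ ω, A ω * B ω ∂P = (∫ ω, A ω ∂P) * (∫ ω, B ω ∂P) := by
  have iA : Integrable A P := integrable_of_bound hA.aestronglyMeasurable a ha
  have iB : Integrable B P := integrable_of_bound hB.aestronglyMeasurable b hb
  have iAB : Integrable (fun ω => A ω * B ω) P := by
    refine integrable_of_bound ((hA.mul hB).aestronglyMeasurable) (a * b) (fun ω => ?_)
    calc ‖A ω * B ω‖ = ‖A ω‖ * ‖B ω‖ := norm_mul _ _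
    _ ≤ a * b := mul_le_mul (ha ω) (hb ω) (norm_nonneg _) ha0
  have bre : ∀ (f : Ω → ℂ) (c : ℝ), (∀ ω, ‖f ω‖ ≤ c) → ∀ ω, |(f ω).re| ≤ c := fun f c hc ω =>
    le_trans (Complex.abs_re_le_norm _) (hc ω)
  have bim : ∀ (f : Ω → ℂ) (c : ℝ), (∀ ω, ‖f ω‖ ≤ c) → ∀ ω, |(f ω).im| ≤ c := fun f c hc ω =>
    le_trans (Complex.abs_im_le_norm _) (hc ω)
  have iAr : Integrable (fun ω => (A ω).re) P :=
    integrable_of_bound (Complex.measurable_re.comp hA).aestronglyMeasurable a (bre A a ha)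
  have iAi : Integrable (fun ω => (A ω).im) P :=
    integrable_of_bound (Complex.measurable_im.comp hA).aestronglyMeasurable a (bim A a ha)
  have iBr : Integrable (fun ω => (B ω).re) P :=
    integrable_of_bound (Complex.measurable_re.comp hB).aestronglyMeasurable b (bre B b hb)
  have iBi : Integrable (fun ω => (B ω).im) P :=
    integrable_of_bound (Complex.measurable_im.comp hB).aestronglyMeasurable b (bim B b hb)
  have iprod : ∀ (f g : Ω → ℝ) (cf cg : ℝ), Measurable f → Measurable g →
      (∀ ω, |f ω| ≤ cf) → (∀ ω, |g ω| ≤ cg) → 0 ≤ cf → 0 ≤ cg →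
      Integrable (fun ω => f ω * g ω) P := by
    intro f g cf cg hf hg hcf hcg h0f h0g
    refine integrable_of_bound ((hf.mul hg).aestronglyMeasurable) (cf * cg) (fun ω => ?_)
    rw [Real.norm_eq_abs, abs_mul]
    exact mul_le_mul (hcf ω) (hcg ω) (abs_nonneg _) h0f
  have hrr : ∫ ω, (A ω).re * (B ω).re ∂P = (∫ ω, (A ω).re ∂P) * ∫ ω, (B ω).re ∂P := by
    simpa [Function.comp] using (h.comp Complex.measurable_re Complex.measurable_re).integral_mul_eq_mul_integral
      iAr.aestronglyMeasurable iBr.aestronglyMeasurable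
  have hri : ∫ ω, (A ω).re * (B ω).im ∂P = (∫ ω, (A ω).re ∂P) * ∫ ω, (B ω).im ∂P := by
    simpa [Function.comp] using (h.comp Complex.measurable_re Complex.measurable_im).integral_mul_eq_mul_integral
      iAr.aestronglyMeasurable iBi.aestronglyMeasurable
  have hir : ∫ ω, (A ω).im * (B ω).re ∂P = (∫ ω, (A ω).im ∂P) * ∫ ω, (B ω).re ∂P := by
    simpa [Function.comp] using (h.comp Complex.measurable_im Complex.measurable_re).integral_mul_eq_mul_integral
      iAi.aestronglyMeasurable iBr.aestronglyMeasurable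
  have hii : ∫ ω, (A ω).im * (B ω).im ∂P = (∫ ω, (A ω).im ∂P) * ∫ ω, (B ω).im ∂P := by
    simpa [Function.comp] using (h.comp Complex.measurable_im Complex.measurable_im).integral_mul_eq_mul_integral
      iAi.aestronglyMeasurable iBi.aestronglyMeasurable
  have irr : Integrable (fun ω => (A ω).re * (B ω).re) P := iprod _ _ a b
    (Complex.measurable_re.comp hA) (Complex.measurable_re.comp hB) (bre A a ha) (bre B b hb) ha0 hb0
  have iri : Integrable (fun ω => (A ω).re * (B ω).im) P := iprod _ _ a b
    (Complex.measurable_re.comp hA) (Complex.measurable_im.comp hB) (bre A a ha) (bim B b hb) ha0 hb0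
  have iir : Integrable (fun ω => (A ω).im * (B ω).re) P := iprod _ _ a b
    (Complex.measurable_im.comp hA) (Complex.measurable_re.comp hB) (bim A a ha) (bre B b hb) ha0 hb0
  have iii : Integrable (fun ω => (A ω).im * (B ω).im) P := iprod _ _ a b
    (Complex.measurable_im.comp hA) (Complex.measurable_im.comp hB) (bim A a ha) (bim B b hb) ha0 hb0
  have eABre : (∫ ω, A ω * B ω ∂P).re = ∫ ω, (A ω * B ω).re ∂P := by
    simpa using (integral_re iAB).symm
  have eABim : (∫ ω, A ω * B ω ∂P).im = ∫ ω, (A ω * B ω).im ∂P := by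
    simpa using (integral_im iAB).symm
  have eAre : (∫ ω, A ω ∂P).re = ∫ ω, (A ω).re ∂P := by simpa using (integral_re iA).symm
  have eAim : (∫ ω, A ω ∂P).im = ∫ ω, (A ω).im ∂P := by simpa using (integral_im iA).symm
  have eBre : (∫ ω, B ω ∂P).re = ∫ ω, (B ω).re ∂P := by simpa using (integral_re iB).symm
  have eBim : (∫ ω, B ω ∂P).im = ∫ ω, (B ω).im ∂P := by simpa using (integral_im iB).symm
  apply Complex.ext
  · rw [eABre, Complex.mul_re, eAre, eAim, eBre, eBim, ← hrr, ← hii]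
    have : (fun ω => (A ω * B ω).re) = fun ω => (A ω).re * (B ω).re - (A ω).im * (B ω).im := by
      funext ω; exact Complex.mul_re _ _
    rw [this, integral_sub irr iii]
  · rw [eABim, Complex.mul_im, eAre, eAim, eBre, eBim, ← hri, ← hir]
    have : (fun ω => (A ω * B ω).im) = fun ω => (A ω).re * (B ω).im + (A ω).im * (B ω).re := by
      funext ω; exact Complex.mul_im _ _
    rw [this, integral_add iri iir]

lemma counting (n m : ℕ) (hn : 0 < n) :
    (univ.filter (fun p : (Fin m → Fin n) × (Fin m → Fin n) =>
      ∀ j, (univ.filter fun i => p.1 i = j).card + (univ.filter fun i => p.2 i = j).card ≠ 1)).card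
      ≤ (m + 1) * m ^ (2 * m) * n ^ m := by
  classical
  set B := univ.filter (fun p : (Fin m → Fin n) × (Fin m → Fin n) =>
      ∀ j, (univ.filter fun i => p.1 i = j).card + (univ.filter fun i => p.2 i = j).card ≠ 1)
    with hB
  set T : Finset (Finset (Fin n)) := (range (m+1)).biUnion (fun i => powersetCard i univ) with hT
  have fibsum : ∀ f : Fin m → Fin n, ∑ j, (univ.filter fun i => f i = j).card = m := by
    intro f
    have := Finset.card_eq_sum_card_fiberwise (f := f) (s := univ) (t := univ)
      (fun x _ => mem_univ (f x))
    simpa using this.symm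
  have hsub : B ⊆ T.biUnion (fun s =>
      (Fintype.piFinset fun _ : Fin m => s) ×ˢ (Fintype.piFinset fun _ : Fin m => s)) := by
    intro p hp
    rw [hB, mem_filter] at hp
    obtain ⟨-, hcond⟩ := hp
    set s := (image p.1 univ) ∪ (image p.2 univ) with hs
    have hging : ∀ j ∈ s, 2 ≤ (univ.filter fun i => p.1 i = j).card
        + (univ.filter fun i => p.2 i = j).card := by
      intro j hj
      have h1 : 1 ≤ (univ.filter fun i => p.1 i = j).card
          + (univ.filter fun i => p.2 i = j).card := by
        rw [hs, mem_union] at hj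
        rcases hj with hj | hj
        · obtain ⟨i, -, hi⟩ := mem_image.1 hj
          have : i ∈ univ.filter fun i => p.1 i = j := by simp [hi]
          have := card_pos.2 ⟨i, this⟩
          omega
        · obtain ⟨i, -, hi⟩ := mem_image.1 hj
          have : i ∈ univ.filter fun i => p.2 i = j := by simp [hi]
          have := card_pos.2 ⟨i, this⟩
          omega
      have := hcond j
      omega
    have hscard : s.card ≤ m := by
      have h2 : 2 * s.card ≤ ∑ j ∈ s, ((univ.filter fun i => p.1 i = j).card
          + (univ.filter fun i => p.2 i = j).card) := by
        calc 2 * s.card = ∑ _j ∈ s, 2 := by rw [sum_const, smul_eq_mul, mul_comm]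
        _ ≤ _ := sum_le_sum hging
      have h3 : ∑ j ∈ s, ((univ.filter fun i => p.1 i = j).card
          + (univ.filter fun i => p.2 i = j).card)
          ≤ ∑ j, ((univ.filter fun i => p.1 i = j).card
          + (univ.filter fun i => p.2 i = j).card) :=
        sum_le_sum_of_subset (subset_univ s)
      have h4 : ∑ j, ((univ.filter fun i => p.1 i = j).card
          + (univ.filter fun i => p.2 i = j).card) = m + m := by
        rw [sum_add_distrib, fibsum p.1, fibsum p.2]
      omega
    refine mem_biUnion.2 ⟨s, ?_, ?_⟩
    · refine mem_biUnion.2 ⟨s.card, ?_, ?_⟩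
      · exact mem_range.2 (Nat.lt_succ_of_le hscard)
      · exact mem_powersetCard.2 ⟨subset_univ _, rfl⟩
    · refine mem_product.2 ⟨Fintype.mem_piFinset.2 fun i => ?_, Fintype.mem_piFinset.2 fun i => ?_⟩
      · exact mem_union_left _ (mem_image_of_mem _ (mem_univ i))
      · exact mem_union_right _ (mem_image_of_mem _ (mem_univ i))
  calc B.card ≤ _ := card_le_card hsub
  _ ≤ ∑ s ∈ T, ((Fintype.piFinset fun _ : Fin m => s) ×ˢ
        (Fintype.piFinset fun _ : Fin m => s)).card := card_biUnion_le
  _ ≤ ∑ _s ∈ T, m ^ (2 * m) := by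
      refine sum_le_sum fun s hsT => ?_
      have hcard : s.card ≤ m := by
        rw [hT, mem_biUnion] at hsT
        obtain ⟨i, hi, hsi⟩ := hsT
        rw [mem_powersetCard] at hsi
        rw [hsi.2]
        exact Nat.lt_succ_iff.1 (mem_range.1 hi)
      rw [card_product, Fintype.card_piFinset, prod_const, card_univ, Fintype.card_fin]
      calc s.card ^ m * s.card ^ m = s.card ^ (2 * m) := by ring
      _ ≤ m ^ (2 * m) := Nat.pow_le_pow_left hcard _
  _ = T.card * m ^ (2 * m) := by rw [sum_const, smul_eq_mul]
  _ ≤ ((m + 1) * n ^ m) * m ^ (2 * m) := by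
      have : T.card ≤ (m + 1) * n ^ m := by
        calc T.card ≤ ∑ i ∈ range (m+1), (powersetCard i (univ : Finset (Fin n))).card :=
          card_biUnion_le
        _ ≤ ∑ _i ∈ range (m+1), n ^ m := by
            refine sum_le_sum fun i hi => ?_
            rw [card_powersetCard, card_univ, Fintype.card_fin]
            calc n.choose i ≤ n ^ i := Nat.choose_le_pow n i
            _ ≤ n ^ m := Nat.pow_le_pow_right hn (Nat.lt_succ_iff.1 (mem_range.1 hi))
        _ = (m + 1) * n ^ m := by rw [sum_const, card_range, smul_eq_mul]
      exact Nat.mul_le_mul_right _ this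
  _ = (m + 1) * m ^ (2 * m) * n ^ m := by ring

lemma prod_eq_prod_pow {n m : ℕ} (f : Fin m → Fin n) (Z : Fin n → ℂ) :
    ∏ i, Z (f i) = ∏ j, Z j ^ (univ.filter fun i => f i = j).card := by
  classical
  rw [Finset.prod_comp]
  refine Finset.prod_subset (subset_univ _) (fun j _ hj => ?_)
  have : (univ.filter fun i => f i = j).card = 0 := by
    rw [card_eq_zero, filter_eq_empty_iff]
    intro i _ hij
    exact hj (hij ▸ mem_image_of_mem f (mem_univ i))
  rw [this, pow_zero]

lemma vanish [IsProbabilityMeasure P] {n m : ℕ} (Y : Fin n → Ω → ℂ)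
    (hmeas : ∀ j, Measurable (Y j))
    (hindep : iIndepFun Y P)
    (h0 : ∀ j, ∫ ω, Y j ω ∂P = 0) (hbd : ∀ j ω, ‖Y j ω‖ ≤ 2)
    (f g : Fin m → Fin n) (j₀ : Fin n)
    (hj : (univ.filter fun i => f i = j₀).card + (univ.filter fun i => g i = j₀).card = 1) :
    ∫ ω, (∏ i, Y (f i) ω) * ∏ i, (starRingEnd ℂ) (Y (g i) ω) ∂P = 0 := by
  classical
  set a : Fin n → ℕ := fun j => (univ.filter fun i => f i = j).card with ha
  set b : Fin n → ℕ := fun j => (univ.filter fun i => g i = j).card with hb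
  set G : Fin n → Ω → ℂ := fun j ω => Y j ω ^ a j * (starRingEnd ℂ) (Y j ω) ^ b j with hG
  have hconj : Measurable fun z : ℂ => (starRingEnd ℂ) z := continuous_star.measurable
  have hGmeas : ∀ j, Measurable (G j) := fun j =>
    ((hmeas j).pow_const _).mul ((hconj.comp (hmeas j)).pow_const _)
  have hGbd : ∀ j ω, ‖G j ω‖ ≤ 2 ^ (a j + b j) := by
    intro j ω
    have h1 : ‖G j ω‖ = ‖Y j ω‖ ^ a j * ‖Y j ω‖ ^ b j := by
      rw [hG]
      simp only [norm_mul, norm_pow, RCLike.norm_conj]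
    rw [h1, pow_add]
    exact mul_le_mul (pow_le_pow_left₀ (norm_nonneg _) (hbd j ω) _)
      (pow_le_pow_left₀ (norm_nonneg _) (hbd j ω) _) (by positivity) (by positivity)
  have hpt : ∀ ω, (∏ i, Y (f i) ω) * ∏ i, (starRingEnd ℂ) (Y (g i) ω) = ∏ j, G j ω := by
    intro ω
    rw [prod_eq_prod_pow f (fun j => Y j ω), prod_eq_prod_pow g (fun j => (starRingEnd ℂ) (Y j ω)),
      ← prod_mul_distrib]
  have hGindep : iIndepFun G P := by
    have := hindep.comp (fun j (z : ℂ) => z ^ a j * (starRingEnd ℂ) z ^ b j)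
      (fun j => (measurable_id.pow_const _).mul (hconj.pow_const _))
    exact this
  have hGint : ∫ ω, G j₀ ω ∂P = 0 := by
    have hj' : a j₀ + b j₀ = 1 := hj
    have hab : (a j₀ = 1 ∧ b j₀ = 0) ∨ (a j₀ = 0 ∧ b j₀ = 1) := by omega
    rcases hab with ⟨h1, h2⟩ | ⟨h1, h2⟩
    · have : G j₀ = fun ω => Y j₀ ω := by funext ω; rw [hG]; simp [h1, h2]
      rw [this]; exact h0 j₀
    · have : G j₀ = fun ω => (starRingEnd ℂ) (Y j₀ ω) := by funext ω; rw [hG]; simp [h1, h2]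
      rw [this, integral_conj, h0 j₀, map_zero]
  set A : Ω → ℂ := fun ω => ∏ j ∈ univ.erase j₀, G j ω with hA
  have hsplit : ∀ ω, ∏ j, G j ω = A ω * G j₀ ω := by
    intro ω
    rw [hA, mul_comm, Finset.mul_prod_erase univ (fun j => G j ω) (mem_univ j₀)]
  have hindep2 : IndepFun A (G j₀) P := by
    have h2 := iIndepFun.indepFun_finset_prod_of_notMem hGindep hGmeas (notMem_erase j₀ univ)
    have h3 : (∏ j ∈ univ.erase j₀, G j) = A := by
      funext ω; rw [Finset.prod_apply]
    rwa [h3] at h2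
  have hAmeas : Measurable A := Finset.measurable_prod _ (fun j _ => hGmeas j)
  set c : ℝ := ∏ j ∈ univ.erase j₀, (2 : ℝ) ^ (a j + b j) with hc
  have hc0 : 0 ≤ c := Finset.prod_nonneg fun j _ => by positivity
  have hAbd : ∀ ω, ‖A ω‖ ≤ c := by
    intro ω
    calc ‖A ω‖ ≤ ∏ j ∈ univ.erase j₀, ‖G j ω‖ := norm_prod_le _ _
    _ ≤ c := Finset.prod_le_prod (fun j _ => norm_nonneg _) (fun j _ => hGbd j ω)
  have hBbd : ∀ ω, ‖G j₀ ω‖ ≤ 2 ^ (a j₀ + b j₀) := hGbd j₀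
  have key : ∫ ω, A ω * G j₀ ω ∂P = (∫ ω, A ω ∂P) * ∫ ω, G j₀ ω ∂P :=
    indep_integral_mul hindep2 hAmeas (hGmeas j₀) hc0 (by positivity) hAbd hBbd
  calc ∫ ω, (∏ i, Y (f i) ω) * ∏ i, (starRingEnd ℂ) (Y (g i) ω) ∂P
      = ∫ ω, A ω * G j₀ ω ∂P := by
        refine integral_congr_ae (ae_of_all _ fun ω => ?_)
        show (∏ i, Y (f i) ω) * ∏ i, (starRingEnd ℂ) (Y (g i) ω) = A ω * G j₀ ω
        rw [← hsplit ω, ← hpt ω]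
  _ = (∫ ω, A ω ∂P) * ∫ ω, G j₀ ω ∂P := key
  _ = 0 := by rw [hGint, mul_zero]

lemma moment_bound [IsProbabilityMeasure P] {n : ℕ} (m : ℕ) (hn : 0 < n)
    (Y : Fin n → Ω → ℂ) (hmeas : ∀ j, Measurable (Y j))
    (hindep : iIndepFun Y P)
    (h0 : ∀ j, ∫ ω, Y j ω ∂P = 0) (hbd : ∀ j ω, ‖Y j ω‖ ≤ 2) :
    ∫ ω, ‖∑ j, Y j ω‖ ^ (2 * m) ∂P
      ≤ ((m + 1) * m ^ (2 * m) * 4 ^ m : ℕ) * (n : ℝ) ^ m := by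
  classical
  set S : Ω → ℂ := fun ω => ∑ j, Y j ω with hS
  have hSmeas : Measurable S := Finset.measurable_sum _ (fun j _ => hmeas j)
  -- pointwise identity
  have hpt : ∀ ω, ((‖S ω‖ ^ (2 * m) : ℝ) : ℂ) = (S ω * (starRingEnd ℂ) (S ω)) ^ m := by
    intro ω
    rw [Complex.mul_conj, Complex.normSq_eq_norm_sq]
    rw [pow_mul]
    push_cast
    ring
  -- expansion as sum over pairs of functions
  have hexp : ∀ ω, (S ω * (starRingEnd ℂ) (S ω)) ^ m
      = ∑ p : (Fin m → Fin n) × (Fin m → Fin n),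
          (∏ i, Y (p.1 i) ω) * ∏ i, (starRingEnd ℂ) (Y (p.2 i) ω) := by
    intro ω
    have hconjS : (starRingEnd ℂ) (S ω) = ∑ j, (starRingEnd ℂ) (Y j ω) := by
      rw [hS]; exact map_sum _ _ _
    rw [mul_pow, hconjS, Fintype.sum_pow, Fintype.sum_pow, Finset.sum_mul_sum]
    exact (Fintype.sum_prod_type' _).symm
  -- each term is measurable and bounded by 4^m
  have htermmeas : ∀ p : (Fin m → Fin n) × (Fin m → Fin n),
      Measurable (fun ω => (∏ i, Y (p.1 i) ω) * ∏ i, (starRingEnd ℂ) (Y (p.2 i) ω)) := by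
    intro p
    exact (Finset.measurable_prod _ fun i _ => hmeas (p.1 i)).mul
      (Finset.measurable_prod _ fun i _ => continuous_star.measurable.comp (hmeas (p.2 i)))
  have htermbd : ∀ (p : (Fin m → Fin n) × (Fin m → Fin n)) ω,
      ‖(∏ i, Y (p.1 i) ω) * ∏ i, (starRingEnd ℂ) (Y (p.2 i) ω)‖ ≤ 4 ^ m := by
    intro p ω
    have h1 : ‖∏ i, Y (p.1 i) ω‖ ≤ 2 ^ m := by
      calc ‖∏ i, Y (p.1 i) ω‖ ≤ ∏ i, ‖Y (p.1 i) ω‖ := norm_prod_le _ _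
      _ ≤ ∏ _i : Fin m, (2:ℝ) := Finset.prod_le_prod (fun i _ => norm_nonneg _)
          (fun i _ => hbd _ ω)
      _ = 2 ^ m := by rw [prod_const, card_univ, Fintype.card_fin]
    have h2 : ‖∏ i, (starRingEnd ℂ) (Y (p.2 i) ω)‖ ≤ 2 ^ m := by
      calc ‖∏ i, (starRingEnd ℂ) (Y (p.2 i) ω)‖ ≤ ∏ i, ‖(starRingEnd ℂ) (Y (p.2 i) ω)‖ :=
          norm_prod_le _ _
      _ ≤ ∏ _i : Fin m, (2:ℝ) := Finset.prod_le_prod (fun i _ => norm_nonneg _)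
          (fun i _ => by rw [RCLike.norm_conj]; exact hbd _ ω)
      _ = 2 ^ m := by rw [prod_const, card_univ, Fintype.card_fin]
    calc ‖(∏ i, Y (p.1 i) ω) * ∏ i, (starRingEnd ℂ) (Y (p.2 i) ω)‖
        = ‖∏ i, Y (p.1 i) ω‖ * ‖∏ i, (starRingEnd ℂ) (Y (p.2 i) ω)‖ := norm_mul _ _
    _ ≤ 2 ^ m * 2 ^ m := mul_le_mul h1 h2 (norm_nonneg _) (by positivity)
    _ = 4 ^ m := by rw [← mul_pow]; norm_num
  have htermint : ∀ p : (Fin m → Fin n) × (Fin m → Fin n),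
      Integrable (fun ω => (∏ i, Y (p.1 i) ω) * ∏ i, (starRingEnd ℂ) (Y (p.2 i) ω)) P :=
    fun p => integrable_of_bound (htermmeas p).aestronglyMeasurable _ (htermbd p)
  -- the complex integral
  set I : ℂ := ∫ ω, (S ω * (starRingEnd ℂ) (S ω)) ^ m ∂P with hI
  have hlhs : ∫ ω, ‖S ω‖ ^ (2 * m) ∂P ≤ ‖I‖ := by
    have h1 : ((∫ ω, ‖S ω‖ ^ (2 * m) ∂P : ℝ) : ℂ) = I := by
      have h2 : ∫ ω, ((‖S ω‖ ^ (2 * m) : ℝ) : ℂ) ∂P = ((∫ ω, ‖S ω‖ ^ (2 * m) ∂P : ℝ) : ℂ) :=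
        integral_ofReal
      rw [← h2]
      exact integral_congr_ae (ae_of_all _ hpt)
    calc ∫ ω, ‖S ω‖ ^ (2 * m) ∂P ≤ |∫ ω, ‖S ω‖ ^ (2 * m) ∂P| := le_abs_self _
    _ = ‖((∫ ω, ‖S ω‖ ^ (2 * m) ∂P : ℝ) : ℂ)‖ := by rw [Complex.norm_real, Real.norm_eq_abs]
    _ = ‖I‖ := by rw [h1]
  -- sum of integrals
  have hIsum : I = ∑ p : (Fin m → Fin n) × (Fin m → Fin n),
      ∫ ω, (∏ i, Y (p.1 i) ω) * ∏ i, (starRingEnd ℂ) (Y (p.2 i) ω) ∂P := by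
    rw [hI]
    rw [integral_congr_ae (ae_of_all _ hexp)]
    exact integral_finset_sum _ (fun p _ => htermint p)
  set B := univ.filter (fun p : (Fin m → Fin n) × (Fin m → Fin n) =>
      ∀ j, (univ.filter fun i => p.1 i = j).card + (univ.filter fun i => p.2 i = j).card ≠ 1)
    with hB
  have hIsum2 : I = ∑ p ∈ B,
      ∫ ω, (∏ i, Y (p.1 i) ω) * ∏ i, (starRingEnd ℂ) (Y (p.2 i) ω) ∂P := by
    rw [hIsum]
    refine (Finset.sum_subset (filter_subset _ _) (fun p _ hp => ?_)).symm
    have hp' : ¬ ∀ j, (univ.filter fun i => p.1 i = j).card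
        + (univ.filter fun i => p.2 i = j).card ≠ 1 := by
      intro hall
      exact hp (mem_filter.2 ⟨mem_univ p, hall⟩)
    push_neg at hp'
    obtain ⟨j₀, hj₀⟩ := hp'
    exact vanish Y hmeas hindep h0 hbd p.1 p.2 j₀ hj₀
  have hfinal : ‖I‖ ≤ (B.card : ℝ) * 4 ^ m := by
    rw [hIsum2]
    calc ‖∑ p ∈ B, ∫ ω, (∏ i, Y (p.1 i) ω) * ∏ i, (starRingEnd ℂ) (Y (p.2 i) ω) ∂P‖
        ≤ ∑ p ∈ B, ‖∫ ω, (∏ i, Y (p.1 i) ω) * ∏ i, (starRingEnd ℂ) (Y (p.2 i) ω) ∂P‖ :=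
          norm_sum_le _ _
    _ ≤ ∑ _p ∈ B, (4:ℝ) ^ m := by
        refine sum_le_sum fun p _ => ?_
        calc ‖∫ ω, (∏ i, Y (p.1 i) ω) * ∏ i, (starRingEnd ℂ) (Y (p.2 i) ω) ∂P‖
            ≤ 4 ^ m * (P Set.univ).toReal :=
              norm_integral_le_of_norm_le_const (ae_of_all _ (htermbd p))
        _ = 4 ^ m := by simp
    _ = (B.card : ℝ) * 4 ^ m := by rw [sum_const, nsmul_eq_mul]
  have hcount : (B.card : ℝ) ≤ ((m + 1) * m ^ (2 * m) : ℕ) * (n : ℝ) ^ m := by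
    have := counting n m hn
    calc (B.card : ℝ) ≤ (((m + 1) * m ^ (2 * m) * n ^ m : ℕ) : ℝ) := by exact_mod_cast this
    _ = ((m + 1) * m ^ (2 * m) : ℕ) * (n : ℝ) ^ m := by push_cast; ring
  show ∫ ω, ‖S ω‖ ^ (2 * m) ∂P ≤ _
  calc ∫ ω, ‖S ω‖ ^ (2 * m) ∂P ≤ ‖I‖ := hlhs
  _ ≤ (B.card : ℝ) * 4 ^ m := hfinal
  _ ≤ (((m + 1) * m ^ (2 * m) : ℕ) * (n : ℝ) ^ m) * 4 ^ m := by
      refine mul_le_mul_of_nonneg_right hcount (by positivity)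
  _ = ((m + 1) * m ^ (2 * m) * 4 ^ m : ℕ) * (n : ℝ) ^ m := by push_cast; ring

lemma hat_moment {Ω : Type} [MeasurableSpace Ω] {P : Measure Ω} [IsProbabilityMeasure P]
    {n : ℕ} (hn : 0 < n) (m : ℕ)
    (Z : Fin n → Ω → ℂ) (hZmeas : ∀ j, Measurable (Z j))
    (hZindep : iIndepFun Z P)
    (hZnorm : ∀ j ω, ‖Z j ω‖ ≤ 1)
    (φ : ℂ) (hφint : ∀ j, ∫ ω, Z j ω ∂P = φ) (hφ1 : ‖φ‖ ≤ 1) :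
    ∫ ω, ‖(n:ℂ)⁻¹ * ∑ j, Z j ω - φ‖ ^ (2*m) ∂P
      ≤ ((m + 1) * m ^ (2 * m) * 4 ^ m : ℕ) * ((n:ℝ)⁻¹) ^ m := by
  set Y : Fin n → Ω → ℂ := fun j ω => Z j ω - φ with hY
  have hYmeas : ∀ j, Measurable (Y j) := fun j => (hZmeas j).sub measurable_const
  have hYindep : iIndepFun Y P := by
    have := hZindep.comp (fun j (z : ℂ) => z - φ) (fun j => measurable_id.sub_const φ)
    exact this
  have hYint0 : ∀ j, ∫ ω, Y j ω ∂P = 0 := by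
    intro j
    have h1 : ∫ ω, Y j ω ∂P = (∫ ω, Z j ω ∂P) - ∫ _ω, φ ∂P :=
      integral_sub (integrable_of_bound (hZmeas j).aestronglyMeasurable 1 (hZnorm j))
        (integrable_const φ)
    rw [h1, hφint j]
    simp
  have hYbd : ∀ j ω, ‖Y j ω‖ ≤ 2 := by
    intro j ω
    calc ‖Y j ω‖ ≤ ‖Z j ω‖ + ‖φ‖ := norm_sub_le _ _
    _ ≤ 1 + 1 := add_le_add (hZnorm j ω) hφ1
    _ = 2 := by norm_num
  have key := moment_bound m hn Y hYmeas hYindep hYint0 hYbd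
  have hnne : (n:ℂ) ≠ 0 := by exact_mod_cast hn.ne'
  have hnR : (0:ℝ) < (n:ℝ) := by exact_mod_cast hn
  have hdiff : ∀ ω, (n:ℂ)⁻¹ * ∑ j, Z j ω - φ = (n:ℂ)⁻¹ * ∑ j, Y j ω := by
    intro ω
    show (n:ℂ)⁻¹ * ∑ j, Z j ω - φ = (n:ℂ)⁻¹ * ∑ j, (Z j ω - φ)
    have h1 : ∑ j, (Z j ω - φ) = (∑ j, Z j ω) - n * φ := by
      rw [Finset.sum_sub_distrib, sum_const, card_univ, Fintype.card_fin, nsmul_eq_mul]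
    rw [h1, mul_sub]
    congr 1
    field_simp
  have hnorm : ∀ ω, ‖(n:ℂ)⁻¹ * ∑ j, Z j ω - φ‖ ^ (2*m)
      = ((n:ℝ)⁻¹)^(2*m) * ‖∑ j, Y j ω‖ ^ (2*m) := by
    intro ω
    rw [hdiff ω, norm_mul, norm_inv, Complex.norm_natCast, mul_pow]
  calc ∫ ω, ‖(n:ℂ)⁻¹ * ∑ j, Z j ω - φ‖ ^ (2*m) ∂P
      = ((n:ℝ)⁻¹)^(2*m) * ∫ ω, ‖∑ j, Y j ω‖ ^ (2*m) ∂P := by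
        rw [← integral_const_mul]
        exact integral_congr_ae (ae_of_all _ hnorm)
  _ ≤ ((n:ℝ)⁻¹)^(2*m) * (((m + 1) * m ^ (2 * m) * 4 ^ m : ℕ) * (n:ℝ)^m) :=
        mul_le_mul_of_nonneg_left key (by positivity)
  _ = ((m + 1) * m ^ (2 * m) * 4 ^ m : ℕ) * ((n:ℝ)⁻¹) ^ m := by
        have h2 : ((n:ℝ)⁻¹)^(2*m) = ((n:ℝ)⁻¹)^m * ((n:ℝ)⁻¹)^m := by rw [← pow_add, two_mul]
        have h3 : ((n:ℝ)⁻¹)^m * (n:ℝ)^m = 1 := by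
          rw [← mul_pow, inv_mul_cancel₀ hnR.ne', one_pow]
        calc ((n:ℝ)⁻¹)^(2*m) * (((m + 1) * m ^ (2 * m) * 4 ^ m : ℕ) * (n:ℝ)^m)
            = (((n:ℝ)⁻¹)^m * (n:ℝ)^m) * (((m + 1) * m ^ (2 * m) * 4 ^ m : ℕ) * ((n:ℝ)⁻¹)^m) := by
              rw [h2]; ring
        _ = ((m + 1) * m ^ (2 * m) * 4 ^ m : ℕ) * ((n:ℝ)⁻¹) ^ m := by rw [h3, one_mul]

lemma main_core {Ω : Type} [MeasurableSpace Ω] {P : Measure Ω} [IsProbabilityMeasure P]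
    (k : ℕ) (hk : 1 ≤ k) (t r : ℝ) (ht0 : 0 < t) (ht1 : t ≤ 1)
    (F : Ω → ℂ) (hFmeas : Measurable F) (hF1 : ∀ ω, ‖F ω‖ ≤ 1)
    (φ : ℂ) (hrdef : r = ‖φ‖) (hr0 : 0 < r) (hr1 : r ≤ 1)
    (Dk DM : ℝ) (hDk0 : 0 ≤ Dk) (hDM0 : 0 ≤ DM)
    (hmomk : ∫ ω, ‖F ω - φ‖ ^ (2*k) ∂P ≤ Dk * t^(2*k))
    (hmomM : ∫ ω, ‖F ω - φ‖ ^ (2*(2*k)) ∂P ≤ DM * t^(2*(2*k))) :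
    ∫ ω, ‖(if t ≤ ‖F ω‖ then (F ω)⁻¹ else 0) - φ⁻¹‖ ^ k ∂P
      ≤ (8^k + 2^k*(Dk+1) + 2^(5*k)*DM + 2^k + 1) * min (t^k / r^(2*k)) (1/r^k) := by
  classical
  set C : ℝ := 8^k + 2^k*(Dk+1) + 2^(5*k)*DM + 2^k + 1 with hC
  have hp2 : (0:ℝ) < 2^k := by positivity
  have hp8 : (0:ℝ) < 8^k := by positivity
  have hp5 : (0:ℝ) < 2^(5*k) := by positivity
  have hq1 : (0:ℝ) ≤ 2^k*(Dk+1) := by positivity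
  have hq2 : (0:ℝ) ≤ 2^(5*k)*DM := by positivity
  have hφne : φ ≠ 0 := by
    intro h
    rw [h, norm_zero] at hrdef
    exact absurd hrdef hr0.ne'
  set X : Ω → ℝ := fun ω => ‖F ω - φ‖ with hX
  have hX0 : ∀ ω, 0 ≤ X ω := fun ω => norm_nonneg _
  have hXbd : ∀ ω, X ω ≤ 2 := by
    intro ω
    calc X ω ≤ ‖F ω‖ + ‖φ‖ := norm_sub_le _ _
    _ ≤ 1 + 1 := add_le_add (hF1 ω) (hrdef ▸ hr1)
    _ = 2 := by norm_num
  have hXmeas : Measurable X := (hFmeas.sub measurable_const).norm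
  have hXintpow : ∀ m : ℕ, Integrable (fun ω => X ω ^ m) P := by
    intro m
    refine integrable_of_bound ((hXmeas.pow_const m).aestronglyMeasurable) (2^m) (fun ω => ?_)
    rw [Real.norm_eq_abs, abs_of_nonneg (pow_nonneg (hX0 ω) m)]
    exact pow_le_pow_left₀ (hX0 ω) (hXbd ω) m
  set W : Ω → ℂ := fun ω => if t ≤ ‖F ω‖ then (F ω)⁻¹ else 0 with hW
  have hWb : ∀ ω, ‖W ω‖ ≤ t⁻¹ := by
    intro ω
    rw [hW]
    by_cases h : t ≤ ‖F ω‖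
    · simp only [if_pos h, norm_inv]
      exact inv_anti₀ ht0 h
    · simp only [if_neg h, norm_zero]
      positivity
  have hWd : ∀ ω, ‖W ω - φ⁻¹‖ ≤ t⁻¹ + r⁻¹ := by
    intro ω
    calc ‖W ω - φ⁻¹‖ ≤ ‖W ω‖ + ‖φ⁻¹‖ := norm_sub_le _ _
    _ ≤ t⁻¹ + r⁻¹ := by
        rw [norm_inv, ← hrdef]
        exact add_le_add (hWb ω) le_rfl
  have hrk0 : (0:ℝ) < r^k := by positivity
  have hr2k0 : (0:ℝ) < r^(2*k) := by positivity
  have htk0 : (0:ℝ) < t^k := by positivity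
  have hintW : ∀ c : ℝ, 0 ≤ c → (∀ ω, ‖W ω - φ⁻¹‖ ≤ c) →
      ∫ ω, ‖W ω - φ⁻¹‖ ^ k ∂P ≤ c^k := by
    intro c hc hcb
    have h9 : ∫ (_ : Ω), c^k ∂P = c^k := by simp
    refine le_trans (integral_mono_of_nonneg (ae_of_all _ fun ω => by positivity)
      (integrable_const _)
      (ae_of_all _ fun ω => pow_le_pow_left₀ (norm_nonneg _) (hcb ω) k)) (le_of_eq h9)
  rcases le_or_gt r t with hcase | hcase
  · -- Case A : r ≤ t, min is 1/r^k
    have hmin : min (t^k / r^(2*k)) (1/r^k) = 1/r^k := by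
      refine min_eq_right ?_
      rw [div_le_div_iff₀ hrk0 hr2k0]
      calc 1 * r^(2*k) = r^k * r^k := by rw [one_mul, ← pow_add, two_mul]
      _ ≤ t^k * r^k := by gcongr
    rw [hmin]
    have hE : ∫ ω, ‖W ω - φ⁻¹‖ ^ k ∂P ≤ (2/r)^k := by
      refine hintW (2/r) (by positivity) (fun ω => ?_)
      calc ‖W ω - φ⁻¹‖ ≤ t⁻¹ + r⁻¹ := hWd ω
      _ ≤ r⁻¹ + r⁻¹ := by gcongr
      _ = 2/r := by ring
    calc ∫ ω, ‖W ω - φ⁻¹‖ ^ k ∂P ≤ (2/r)^k := hE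
    _ = 2^k * (1/r^k) := by rw [div_pow]; ring
    _ ≤ C * (1/r^k) := by
        refine mul_le_mul_of_nonneg_right ?_ (by positivity)
        rw [hC]; linarith
  rcases le_or_gt r (2*t) with hcase2 | hcase2
  · -- Case B : t < r ≤ 2t, min is t^k/r^(2k)
    have hmin : min (t^k / r^(2*k)) (1/r^k) = t^k / r^(2*k) := by
      refine min_eq_left ?_
      rw [div_le_div_iff₀ hr2k0 hrk0]
      calc t^k * r^k ≤ r^k * r^k := by gcongr
      _ = 1 * r^(2*k) := by rw [one_mul, ← pow_add, two_mul]
    rw [hmin]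
    have hE : ∫ ω, ‖W ω - φ⁻¹‖ ^ k ∂P ≤ (2/t)^k := by
      refine hintW (2/t) (by positivity) (fun ω => ?_)
      calc ‖W ω - φ⁻¹‖ ≤ t⁻¹ + r⁻¹ := hWd ω
      _ ≤ t⁻¹ + t⁻¹ := by gcongr
      _ = 2/t := by ring
    have h4 : r^(2*k) ≤ 4^k * t^(2*k) := by
      calc r^(2*k) ≤ (2*t)^(2*k) := pow_le_pow_left₀ hr0.le hcase2 _
      _ = 4^k * t^(2*k) := by
          rw [mul_pow, pow_mul]
          norm_num
    have hE2 : (2/t)^k ≤ 8^k * (t^k / r^(2*k)) := by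
      have h5 : t^k / (4^k * t^(2*k)) ≤ t^k / r^(2*k) := by gcongr
      have h6 : (2/t)^k = 8^k * (t^k / (4^k * t^(2*k))) := by
        rw [div_pow]
        have h7 : (8:ℝ)^k = 2^k * 4^k := by rw [← mul_pow]; norm_num
        have h8 : t^(2*k) = t^k * t^k := by rw [← pow_add, two_mul]
        rw [h7, h8]
        field_simp
      rw [h6]
      gcongr
    calc ∫ ω, ‖W ω - φ⁻¹‖ ^ k ∂P ≤ (2/t)^k := hE
    _ ≤ 8^k * (t^k / r^(2*k)) := hE2
    _ ≤ C * (t^k / r^(2*k)) := by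
        refine mul_le_mul_of_nonneg_right ?_ (by positivity)
        rw [hC]; linarith
  · -- Case C : 2t < r
    have htr : t ≤ r := by linarith
    have hmin : min (t^k / r^(2*k)) (1/r^k) = t^k / r^(2*k) := by
      refine min_eq_left ?_
      rw [div_le_div_iff₀ hr2k0 hrk0]
      calc t^k * r^k ≤ r^k * r^k := by gcongr
      _ = 1 * r^(2*k) := by rw [one_mul, ← pow_add, two_mul]
    rw [hmin]
    have hts : t ≤ r/2 := by linarith
    set c1 : ℝ := (2/r^2)^k with hc1
    set c2 : ℝ := (2/t)^k * (2/r)^(2*(2*k)) with hc2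
    have hc10 : 0 ≤ c1 := by positivity
    have hc20 : 0 ≤ c2 := by positivity
    -- pointwise claim
    have hclaim : ∀ ω, ‖W ω - φ⁻¹‖^k ≤ c1 * X ω^k + c2 * X ω^(2*(2*k)) := by
      intro ω
      by_cases hbr : r/2 ≤ ‖F ω‖
      · have hcond : t ≤ ‖F ω‖ := le_trans hts hbr
        have hFpos : 0 < ‖F ω‖ := lt_of_lt_of_le (by linarith) hbr
        have hFne : F ω ≠ 0 := by
          intro h; rw [h, norm_zero] at hFpos; exact lt_irrefl 0 hFpos
        have hWeq : W ω = (F ω)⁻¹ := by rw [hW]; simp only [if_pos hcond]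
        have hd : ‖W ω - φ⁻¹‖ = X ω / (‖F ω‖ * r) := by
          rw [hWeq, inv_sub_inv hFne hφne, norm_div, norm_mul, ← hrdef, norm_sub_rev]
        have hd2 : ‖W ω - φ⁻¹‖ ≤ 2/r^2 * X ω := by
          rw [hd]
          have hXω : 0 ≤ X ω := hX0 ω
          have hden : r/2 * r ≤ ‖F ω‖ * r := mul_le_mul_of_nonneg_right hbr hr0.le
          have h1 : X ω / (‖F ω‖ * r) ≤ X ω / (r/2 * r) := by gcongr
          have h2 : X ω / (r/2 * r) = 2/r^2 * X ω := by field_simp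
          rw [← h2]
          exact h1
        calc ‖W ω - φ⁻¹‖^k ≤ (2/r^2 * X ω)^k :=
            pow_le_pow_left₀ (norm_nonneg _) hd2 k
        _ = c1 * X ω^k := by rw [mul_pow, hc1]
        _ ≤ c1 * X ω^k + c2 * X ω^(2*(2*k)) := by
            have : 0 ≤ c2 * X ω^(2*(2*k)) := mul_nonneg hc20 (pow_nonneg (hX0 ω) _)
            linarith
      · push_neg at hbr
        have hXlb : r/2 ≤ X ω := by
          have h1 : ‖φ‖ - ‖F ω‖ ≤ ‖φ - F ω‖ := norm_sub_norm_le _ _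
          rw [norm_sub_rev] at h1
          rw [← hrdef] at h1
          have : ‖F ω - φ‖ = X ω := rfl
          linarith [this ▸ h1]
        have hone : 1 ≤ (2/r)^(2*(2*k)) * X ω^(2*(2*k)) := by
          rw [← mul_pow]
          have h1 : (1:ℝ) ≤ (2/r) * X ω := by
            have h2 : (2/r) * (r/2) = 1 := by field_simp
            calc (1:ℝ) = (2/r) * (r/2) := h2.symm
            _ ≤ (2/r) * X ω := by gcongr
          calc (1:ℝ) = 1^(2*(2*k)) := (one_pow _).symm
          _ ≤ ((2/r) * X ω)^(2*(2*k)) := pow_le_pow_left₀ zero_le_one h1 _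
        have hWd2 : ‖W ω - φ⁻¹‖ ≤ 2/t := by
          calc ‖W ω - φ⁻¹‖ ≤ t⁻¹ + r⁻¹ := hWd ω
          _ ≤ t⁻¹ + t⁻¹ := by gcongr
          _ = 2/t := by ring
        calc ‖W ω - φ⁻¹‖^k ≤ (2/t)^k := pow_le_pow_left₀ (norm_nonneg _) hWd2 k
        _ ≤ (2/t)^k * ((2/r)^(2*(2*k)) * X ω^(2*(2*k))) := le_mul_of_one_le_right (by positivity) hone
        _ = c2 * X ω^(2*(2*k)) := by rw [hc2]; ring
        _ ≤ c1 * X ω^k + c2 * X ω^(2*(2*k)) := by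
            have : 0 ≤ c1 * X ω^k := mul_nonneg hc10 (pow_nonneg (hX0 ω) _)
            linarith
    -- integrate the claim
    have hint1 : Integrable (fun ω => c1 * X ω^k + c2 * X ω^(2*(2*k))) P :=
      ((hXintpow k).const_mul c1).add ((hXintpow (2*(2*k))).const_mul c2)
    have hE1 : ∫ ω, ‖W ω - φ⁻¹‖ ^ k ∂P ≤ c1 * (∫ ω, X ω^k ∂P) + c2 * (∫ ω, X ω^(2*(2*k)) ∂P) := by
      have hstep : ∫ ω, ‖W ω - φ⁻¹‖ ^ k ∂P ≤ ∫ ω, (c1 * X ω^k + c2 * X ω^(2*(2*k))) ∂P :=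
        integral_mono_of_nonneg (ae_of_all _ fun ω => pow_nonneg (norm_nonneg _) k) hint1
          (ae_of_all _ hclaim)
      have hsplit2 : ∫ ω, (c1 * X ω^k + c2 * X ω^(2*(2*k))) ∂P
          = c1 * (∫ ω, X ω^k ∂P) + c2 * (∫ ω, X ω^(2*(2*k)) ∂P) := by
        rw [integral_add ((hXintpow k).const_mul c1) ((hXintpow (2*(2*k))).const_mul c2),
          integral_const_mul, integral_const_mul]
      rw [← hsplit2]
      exact hstep
    -- odd moment bound
    have hEk : ∫ ω, X ω^k ∂P ≤ (Dk + 1) * t^k := by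
      have hpt2 : ∀ ω, X ω^k ≤ t⁻¹^k * X ω^(2*k) + t^k := by
        intro ω
        have hXω : 0 ≤ X ω := hX0 ω
        rcases le_or_gt (X ω ^ k) (t^k) with h | h
        · have h0 : 0 ≤ t⁻¹^k * X ω^(2*k) :=
            mul_nonneg (by positivity) (pow_nonneg hXω _)
          linarith
        · have h2 : t⁻¹^k * (t^k * X ω^k) = X ω^k := by
            rw [← mul_assoc, ← mul_pow, inv_mul_cancel₀ ht0.ne', one_pow, one_mul]
          have h3 : t^k * X ω^k ≤ X ω^(2*k) := by
            calc t^k * X ω^k ≤ X ω^k * X ω^k :=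
              mul_le_mul_of_nonneg_right h.le (pow_nonneg hXω _)
            _ = X ω^(2*k) := by rw [← pow_add, two_mul]
          have h4 : t⁻¹^k * (t^k * X ω^k) ≤ t⁻¹^k * X ω^(2*k) :=
            mul_le_mul_of_nonneg_left h3 (by positivity)
          linarith
      have hint2 : Integrable (fun ω => t⁻¹^k * X ω^(2*k) + t^k) P :=
        ((hXintpow (2*k)).const_mul _).add (integrable_const _)
      have hstep : ∫ ω, X ω^k ∂P ≤ ∫ ω, (t⁻¹^k * X ω^(2*k) + t^k) ∂P :=
        integral_mono_of_nonneg (ae_of_all _ fun ω => pow_nonneg (hX0 ω) k) hint2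
          (ae_of_all _ hpt2)
      have hsplit2 : ∫ ω, (t⁻¹^k * X ω^(2*k) + t^k) ∂P
          = t⁻¹^k * (∫ ω, X ω^(2*k) ∂P) + t^k := by
        rw [integral_add ((hXintpow (2*k)).const_mul _) (integrable_const _),
          integral_const_mul]
        simp
      have hlast : t⁻¹^k * (∫ ω, X ω^(2*k) ∂P) + t^k ≤ t⁻¹^k * (Dk * t^(2*k)) + t^k := by
        have hmono : t⁻¹^k * (∫ ω, X ω^(2*k) ∂P) ≤ t⁻¹^k * (Dk * t^(2*k)) :=
          mul_le_mul_of_nonneg_left hmomk (by positivity)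
        linarith
      have hfin : t⁻¹^k * (Dk * t^(2*k)) + t^k = (Dk + 1) * t^k := by
        have h8 : t^(2*k) = t^k * t^k := by rw [← pow_add, two_mul]
        rw [h8]
        have hinv : t⁻¹^k * t^k = 1 := by rw [← mul_pow, inv_mul_cancel₀ ht0.ne', one_pow]
        linear_combination (Dk * t^k) * hinv
      calc ∫ ω, X ω^k ∂P ≤ ∫ ω, (t⁻¹^k * X ω^(2*k) + t^k) ∂P := hstep
      _ = t⁻¹^k * (∫ ω, X ω^(2*k) ∂P) + t^k := hsplit2
      _ ≤ t⁻¹^k * (Dk * t^(2*k)) + t^k := hlast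
      _ = (Dk + 1) * t^k := hfin
    -- term 1
    have hterm1 : c1 * ((Dk + 1) * t^k) = 2^k * (Dk + 1) * (t^k / r^(2*k)) := by
      rw [hc1, div_pow]
      have : (r^2)^k = r^(2*k) := by rw [← pow_mul]
      rw [this]
      field_simp
    -- term 2
    have hterm2 : c2 * (DM * t^(2*(2*k))) ≤ 2^(5*k) * DM * (t^k / r^(2*k)) := by
      have heq : c2 * (DM * t^(2*(2*k))) = 2^(5*k) * DM * (t^(3*k) / r^(4*k)) := by
        rw [hc2, div_pow, div_pow]
        have h1 : t ≠ 0 := ht0.ne'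
        have h2 : r ≠ 0 := hr0.ne'
        field_simp
        ring
      rw [heq]
      have hle : t^(3*k) / r^(4*k) ≤ t^k / r^(2*k) := by
        rw [div_le_div_iff₀ (by positivity) (by positivity)]
        calc t^(3*k) * r^(2*k) = t^k * t^(2*k) * r^(2*k) := by rw [← pow_add]; ring_nf
        _ ≤ t^k * r^(2*k) * r^(2*k) := by gcongr
        _ = t^k * r^(4*k) := by rw [mul_assoc, ← pow_add]; ring_nf
      gcongr
    calc ∫ ω, ‖W ω - φ⁻¹‖ ^ k ∂P
        ≤ c1 * (∫ ω, X ω^k ∂P) + c2 * (∫ ω, X ω^(2*(2*k)) ∂P) := hE1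
    _ ≤ c1 * ((Dk + 1) * t^k) + c2 * (DM * t^(2*(2*k))) := by
        gcongr
    _ ≤ 2^k * (Dk + 1) * (t^k / r^(2*k)) + 2^(5*k) * DM * (t^k / r^(2*k)) := by
        rw [hterm1]
        gcongr
    _ = (2^k * (Dk + 1) + 2^(5*k) * DM) * (t^k / r^(2*k)) := by ring
    _ ≤ C * (t^k / r^(2*k)) := by
        refine mul_le_mul_of_nonneg_right ?_ (by positivity)
        rw [hC]; linarith


end NeumannProofAux

open NeumannProofAux

/-- Neumann's lemma: for the truncated reciprocal
`1/φ̃_n(u) = 1(|φ̂_n(u)| ≥ n^{−1/2})/φ̂_n(u)` of the empirical characteristic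
function of an i.i.d. sample, for every `k ≥ 1` there is a constant `C_k`
depending only on `k` with
`E[|1/φ̃_n(u) − 1/φ(u)|^k] ≤ C_k (n^{−k/2}/|φ(u)|^{2k} ∧ 1/|φ(u)|^k)`. -/
theorem neumann_lemma_pointwise :
    ∀ k : ℕ, 1 ≤ k → ∃ C : ℝ, 0 < C ∧
      ∀ (Ω : Type) (_ : MeasurableSpace Ω) (P : Measure Ω), IsProbabilityMeasure P →
      ∀ (n : ℕ) (hn : 0 < n) (X : Fin n → Ω → ℝ),
        (∀ j, Measurable (X j)) →
        iIndepFun X P →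
        (∀ j, Measure.map (X j) P = Measure.map (X ⟨0, hn⟩) P) →
        ∀ u : ℝ, (∫ ω, Complex.exp (Complex.I * u * (X ⟨0, hn⟩ ω)) ∂P) ≠ 0 →
          (∫ ω, ‖(if ((n : ℝ)) ^ (-(1 : ℝ) / 2)
                    ≤ ‖(n : ℂ)⁻¹ * ∑ j, Complex.exp (Complex.I * u * (X j ω))‖
                  then ((n : ℂ)⁻¹ * ∑ j, Complex.exp (Complex.I * u * (X j ω)))⁻¹
                  else 0)
                - (∫ ω', Complex.exp (Complex.I * u * (X ⟨0, hn⟩ ω')) ∂P)⁻¹‖ ^ k ∂P)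
            ≤ C * min
                ((n : ℝ) ^ (-(k : ℝ) / 2)
                  / ‖∫ ω', Complex.exp (Complex.I * u * (X ⟨0, hn⟩ ω')) ∂P‖ ^ (2 * k))
                (1 / ‖∫ ω', Complex.exp (Complex.I * u * (X ⟨0, hn⟩ ω')) ∂P‖ ^ k) := by
  intro k hk
  set Dk : ℝ := (((k + 1) * k ^ (2 * k) * 4 ^ k : ℕ) : ℝ) with hDk
  set DM : ℝ := (((2*k + 1) * (2*k) ^ (2 * (2*k)) * 4 ^ (2*k) : ℕ) : ℝ) with hDM
  have hDk0 : 0 ≤ Dk := by rw [hDk]; positivity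
  have hDM0 : 0 ≤ DM := by rw [hDM]; positivity
  refine ⟨8^k + 2^k*(Dk+1) + 2^(5*k)*DM + 2^k + 1, by positivity, ?_⟩
  intro Ω mΩ P hP n hn X hXmeas hXindep hXid u hφne
  haveI := hP
  set Z : Fin n → Ω → ℂ := fun j ω => Complex.exp (Complex.I * u * (X j ω)) with hZ
  set φ : ℂ := ∫ ω', Complex.exp (Complex.I * u * (X ⟨0, hn⟩ ω')) ∂P with hφ
  set t : ℝ := (n : ℝ) ^ (-(1:ℝ)/2) with ht
  set r : ℝ := ‖φ‖ with hr
  -- basic facts about t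
  have hn1 : (1:ℝ) ≤ (n:ℝ) := by exact_mod_cast hn
  have hn0 : (0:ℝ) < (n:ℝ) := by linarith
  have ht0 : 0 < t := Real.rpow_pos_of_pos hn0 _
  have ht1 : t ≤ 1 := Real.rpow_le_one_of_one_le_of_nonpos hn1 (by norm_num)
  have htpow : ∀ m : ℕ, t ^ m = (n:ℝ) ^ (-(m:ℝ)/2) := by
    intro m
    rw [ht, ← Real.rpow_natCast ((n : ℝ) ^ (-(1:ℝ)/2)) m, ← Real.rpow_mul hn0.le]
    congr 1
    ring
  have ht2 : t^2 = (n:ℝ)⁻¹ := by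
    rw [htpow 2]
    norm_num
    exact Real.rpow_neg_one _
  -- facts about Z
  have hmexp : ∀ j : Fin n, Measurable fun ω => Complex.I * u * (X j ω : ℂ) :=
    fun j => measurable_const.mul (Complex.measurable_ofReal.comp (hXmeas j))
  have hZmeas : ∀ j, Measurable (Z j) := fun j => Complex.measurable_exp.comp (hmexp j)
  have hZnorm1 : ∀ (j : Fin n) ω, ‖Z j ω‖ = 1 := by
    intro j ω
    rw [hZ]
    simp only [Complex.norm_exp]
    have : (Complex.I * u * (X j ω : ℂ)).re = 0 := by
      simp [Complex.mul_re, Complex.mul_im]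
    rw [this, Real.exp_zero]
  have hZnorm : ∀ (j : Fin n) ω, ‖Z j ω‖ ≤ 1 := fun j ω => le_of_eq (hZnorm1 j ω)
  have hZindep : iIndepFun Z P := by
    have := hXindep.comp (fun (_ : Fin n) (x : ℝ) => Complex.exp (Complex.I * u * x))
      (fun j => Complex.measurable_exp.comp
        (measurable_const.mul Complex.measurable_ofReal))
    exact this
  have hZint : ∀ j, ∫ ω, Z j ω ∂P = φ := by
    intro j
    have hcont : Continuous fun x : ℝ => Complex.exp (Complex.I * u * x) :=
      Complex.continuous_exp.comp (continuous_const.mul Complex.continuous_ofReal)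
    have h1 : ∫ ω, Z j ω ∂P = ∫ x, Complex.exp (Complex.I * u * x) ∂(Measure.map (X j) P) :=
      (integral_map (hXmeas j).aemeasurable hcont.aestronglyMeasurable).symm
    have h2 : ∫ ω, Complex.exp (Complex.I * u * (X ⟨0, hn⟩ ω)) ∂P
        = ∫ x, Complex.exp (Complex.I * u * x) ∂(Measure.map (X ⟨0, hn⟩) P) :=
      (integral_map (hXmeas _).aemeasurable hcont.aestronglyMeasurable).symm
    rw [h1, hXid j, hφ, h2]
  have hr0 : 0 < r := by
    rw [hr]
    exact norm_pos_iff.2 hφne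
  have hr1 : r ≤ 1 := by
    rw [hr, hφ]
    calc ‖∫ ω', Complex.exp (Complex.I * u * (X ⟨0, hn⟩ ω')) ∂P‖
        ≤ 1 * (P Set.univ).toReal := norm_integral_le_of_norm_le_const
          (ae_of_all _ (fun ω => le_of_eq (hZnorm1 ⟨0, hn⟩ ω)))
    _ = 1 := by simp
  -- F
  set F : Ω → ℂ := fun ω => (n : ℂ)⁻¹ * ∑ j, Z j ω with hF
  have hFmeas : Measurable F :=
    measurable_const.mul (Finset.measurable_sum _ (fun j _ => hZmeas j))
  have hF1 : ∀ ω, ‖F ω‖ ≤ 1 := by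
    intro ω
    rw [hF]
    have hsumb : ‖∑ j, Z j ω‖ ≤ (n:ℝ) := by
      calc ‖∑ j, Z j ω‖ ≤ ∑ j, ‖Z j ω‖ := norm_sum_le _ _
      _ = ∑ _j : Fin n, (1:ℝ) := by
          refine Finset.sum_congr rfl fun j _ => hZnorm1 j ω
      _ = (n:ℝ) := by simp
    have hnn : ‖(n : ℂ)⁻¹ * ∑ j, Z j ω‖ = ((n:ℝ))⁻¹ * ‖∑ j, Z j ω‖ := by
      rw [norm_mul, norm_inv, Complex.norm_natCast]
    calc ‖(n : ℂ)⁻¹ * ∑ j, Z j ω‖ = ((n:ℝ))⁻¹ * ‖∑ j, Z j ω‖ := hnn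
    _ ≤ ((n:ℝ))⁻¹ * (n:ℝ) := by gcongr
    _ = 1 := inv_mul_cancel₀ hn0.ne'
  -- moments
  have hmomgen : ∀ m : ℕ, ∫ ω, ‖F ω - φ‖ ^ (2*m) ∂P
      ≤ ((m + 1) * m ^ (2 * m) * 4 ^ m : ℕ) * t^(2*m) := by
    intro m
    have h1 := hat_moment hn m Z hZmeas hZindep hZnorm φ hZint (hr ▸ hr1)
    have h2 : ((n:ℝ)⁻¹)^m = t^(2*m) := by
      rw [← ht2, ← pow_mul, mul_comm]
    rw [← h2]
    exact h1
  have hmomk := hmomgen k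
  have hmomM := hmomgen (2*k)
  rw [← hDk] at hmomk
  rw [← hDM] at hmomM
  -- final
  have hcore := main_core k hk t r ht0 ht1 F hFmeas hF1 φ hr hr0 hr1 Dk DM hDk0 hDM0 hmomk hmomM
  have hrw : (n : ℝ) ^ (-(k:ℝ)/2) = t^k := (htpow k).symm
  rw [hrw]
  exact hcore
end
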